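/- arXiv:2306.05393 — 3 statements merged into one kernel-verified Lean document; each statement's English description precedes it below -/
import Mathlib

section
/- Let C be a symmetric monoidal stable ∞-category and A an algebra in C. If the Amitsur (cobar) complex of A is d-rapidly convergent to the unit 𝟙 (condition (1)_d), then the canonical map 𝟙 → Tot_d(A^{⊗•+1}) admits a retraction (condition (2)_d). -/
open CategoryTheory Limits Pretriangulated MonoidalCategory

universe v u

variable (C : Type u) [Category.{v} C]

section
variable [Preadditive C] [HasZeroObject C] [HasShift C ℤ]
  [∀ n : ℤ, (CategoryTheory.shiftFunctor C n).Additive] [Pretriangulated C]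

/-- Fibre data for the comparison map from a constant tower `{Yinf}` to a tower `{Y n}`:
a choice of fibres `F n = fib(Yinf → Y n)`, functorially in `n`. -/
structure TowerFiberData (Y : ℕ → C) (t : ∀ n, Y (n + 1) ⟶ Y n)
    (Yinf : C) (f : ∀ n, Yinf ⟶ Y n) where
  F : ℕ → C
  ft : ∀ n, F (n + 1) ⟶ F n
  ι : ∀ n, F n ⟶ Yinf
  δ : ∀ n, Y n ⟶ (F n)⟦(1 : ℤ)⟧
  tri : ∀ n, Triangle.mk (ι n) (f n) (δ n) ∈ distTriang C
  comm : ∀ n, ft n ≫ ι n = ι (n + 1)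
  sqδ : ∀ n, t n ≫ δ n = δ (n + 1) ≫ (CategoryTheory.shiftFunctor C (1 : ℤ)).map (ft n)

variable {C}

/-- The `k`-fold composite `F (n + k) ⟶ F n` in the tower of fibres. -/
def TowerFiberData.cmp {Y : ℕ → C} {t : ∀ n, Y (n + 1) ⟶ Y n} {Yinf : C}
    {f : ∀ n, Yinf ⟶ Y n} (D : TowerFiberData C Y t Yinf f) :
    ∀ n k : ℕ, D.F (n + k) ⟶ D.F n
  | _, 0 => 𝟙 _
  | n, k + 1 => D.ft (n + k) ≫ D.cmp n k

variable (C)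

/-- A tower `{Y n}` is *`d`-rapidly convergent* to `Yinf` if there is fibre data for which
every `d`-fold composite in the tower of fibres is null. -/
def RapidlyConvergent (Y : ℕ → C) (t : ∀ n, Y (n + 1) ⟶ Y n)
    (Yinf : C) (f : ∀ n, Yinf ⟶ Y n) (d : ℕ) : Prop :=
  ∃ D : TowerFiberData C Y t Yinf f, ∀ n, D.cmp n d = 0

end

section
variable [MonoidalCategory C]

/-- `A^{⊗(n+1)}`. -/
def tensorPow (A : C) : ℕ → C
  | 0 => A
  | n + 1 => tensorPow A n ⊗ A

/-- The `Tot`-tower of the cobar (Amitsur) complex `R^{⊗•+1} ⊗ M`: a cosimplicial object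
whose `n`-th term is `R^{⊗(n+1)} ⊗ M`, partial totalizations `Tot n` realised as limits over
the truncated simplex categories, and the canonical augmentation maps `f n : M ⟶ Tot n`. -/
structure CobarTotTower (R M : C) where
  X : CosimplicialObject C
  hX : ∀ n : ℕ, X.obj (SimplexCategory.mk n) ≅ tensorPow C R n ⊗ M
  Tot : ℕ → C
  t : ∀ n, Tot (n + 1) ⟶ Tot n
  cone : ∀ n : ℕ, Cone (SimplexCategory.Truncated.inclusion n ⋙ X)
  hpt : ∀ n, (cone n).pt = Tot n
  hlim : ∀ n, IsLimit (cone n)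
  f : ∀ n, M ⟶ Tot n
  compat : ∀ n, f (n + 1) ≫ t n = f n

end

/-- Let `C` be a symmetric monoidal stable ∞-category and `A` an algebra in
`C`.  If the Amitsur (cobar) complex of `A` is `d`-rapidly convergent to the unit `𝟙`
(condition `(1)_d`), then the canonical map `𝟙 → Tot_d (A^{⊗•+1})` admits a retraction
(condition `(2)_d`). -/
theorem amitsur_rapid_convergence_gives_retraction
    [Preadditive C] [HasZeroObject C] [HasShift C ℤ]
    [∀ n : ℤ, (CategoryTheory.shiftFunctor C n).Additive] [Pretriangulated C]
    [MonoidalCategory C]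
    (A : Mon C) (T : CobarTotTower C A.X (𝟙_ C)) (d : ℕ)
    (h : RapidlyConvergent C T.Tot T.t (𝟙_ C) T.f d) :
    ∃ r : T.Tot d ⟶ 𝟙_ C, T.f d ≫ r = 𝟙 (𝟙_ C) := by
  obtain ⟨D, hD⟩ := h
  have hι : ∀ n k, D.ι (n + k) = D.cmp n k ≫ D.ι n := by
    intro n k
    induction k with
    | zero => simp [TowerFiberData.cmp]
    | succ k ih =>
      rw [TowerFiberData.cmp, Category.assoc, ← ih]
      exact (D.comm (n + k)).symm
  have hι0 : D.ι d = 0 := by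
    have h0 := hι 0 d
    rw [hD 0, zero_comp] at h0
    rw [show d = 0 + d from (Nat.zero_add d).symm]
    exact h0
  obtain ⟨g, hg⟩ := Triangle.yoneda_exact₂ _ (D.tri d) (𝟙 (𝟙_ C))
    (by simp [hι0]; exact Category.comp_id _)
  exact ⟨g, hg.symm⟩
end

section
/- Let C be a stable ∞-category and X → Y → Z a cofibre sequence of towers (functors ℤ≥0^op → C) with specified maps from constant towers X_∞, Y_∞, Z_∞ forming a cofibre sequence compatible with the tower maps. If the tower for X is r-rapidly convergent and the tower for Z is r'-rapidly convergent, then the tower for Y is (r+r')-rapidly convergent. -/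
open CategoryTheory Limits Pretriangulated MonoidalCategory

universe v u

variable (C : Type u) [Category.{v} C]

section AuxRapid

variable {C}
variable [Preadditive C] [HasZeroObject C] [HasShift C ℤ]
  [∀ n : ℤ, (CategoryTheory.shiftFunctor C n).Additive] [Pretriangulated C]

/-- `k`-fold composite of transition maps in a tower. -/
def tcmpAux {Y : ℕ → C} (t : ∀ n, Y (n + 1) ⟶ Y n) : ∀ n k : ℕ, Y (n + k) ⟶ Y n
  | _, 0 => 𝟙 _
  | n, k + 1 => t (n + k) ≫ tcmpAux t n k

lemma TowerFiberData.cmp_eq_tcmpAux {Y : ℕ → C} {t : ∀ n, Y (n + 1) ⟶ Y n} {Yinf : C}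
    {f : ∀ n, Yinf ⟶ Y n} (D : TowerFiberData C Y t Yinf f) (n : ℕ) :
    ∀ k, D.cmp n k = tcmpAux D.ft n k := by
  intro k
  induction k with
  | zero => rfl
  | succ k ih => rw [TowerFiberData.cmp, tcmpAux, ih]

lemma tcmpAux_natural {Y Z : ℕ → C} {tY : ∀ n, Y (n + 1) ⟶ Y n} {tZ : ∀ n, Z (n + 1) ⟶ Z n}
    (v : ∀ n, Y n ⟶ Z n) (hv : ∀ n, tY n ≫ v n = v (n + 1) ≫ tZ n) (n : ℕ) :
    ∀ k, tcmpAux tY n k ≫ v n = v (n + k) ≫ tcmpAux tZ n k := by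
  intro k
  induction k with
  | zero => simp [tcmpAux]
  | succ k ih =>
    show (tY (n + k) ≫ tcmpAux tY n k) ≫ v n = v (n + k + 1) ≫ tZ (n + k) ≫ tcmpAux tZ n k
    rw [Category.assoc, ih, ← Category.assoc, hv (n + k), Category.assoc]

lemma tcmpAux_map {Y : ℕ → C} (t : ∀ n, Y (n + 1) ⟶ Y n) {D : Type*} [Category D] (F : C ⥤ D)
    (n : ℕ) : ∀ k, tcmpAux (Y := fun m => F.obj (Y m)) (fun m => F.map (t m)) n k
      = F.map (tcmpAux t n k) := by
  intro k
  induction k with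
  | zero => simp [tcmpAux]
  | succ k ih => rw [tcmpAux, tcmpAux, ih, F.map_comp]

lemma tcmpAux_comp_const {Y : ℕ → C} {t : ∀ n, Y (n + 1) ⟶ Y n} {W : C}
    (ι : ∀ n, Y n ⟶ W) (h : ∀ n, t n ≫ ι n = ι (n + 1)) (n : ℕ) :
    ∀ k, tcmpAux t n k ≫ ι n = ι (n + k) := by
  intro k
  induction k with
  | zero => simp [tcmpAux]
  | succ k ih =>
    show (t (n + k) ≫ tcmpAux t n k) ≫ ι n = ι (n + k + 1)
    rw [Category.assoc, ih, h (n + k)]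

lemma tcmpAux_const_comp {Y : ℕ → C} {t : ∀ n, Y (n + 1) ⟶ Y n} {W : C}
    (f : ∀ n, W ⟶ Y n) (h : ∀ n, f (n + 1) ≫ t n = f n) (n : ℕ) :
    ∀ k, f (n + k) ≫ tcmpAux t n k = f n := by
  intro k
  induction k with
  | zero => simp [tcmpAux]
  | succ k ih =>
    show f (n + k + 1) ≫ t (n + k) ≫ tcmpAux t n k = f n
    rw [← Category.assoc, h (n + k), ih]

lemma tcmpAux_eqToHom {Y : ℕ → C} (t : ∀ n, Y (n + 1) ⟶ Y n) {a b : ℕ} (hab : a = b)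
    (h1 : Y (a + 1) = Y (b + 1)) (h2 : Y a = Y b) :
    t a ≫ eqToHom h2 = eqToHom h1 ≫ t b := by
  subst hab; simp

lemma tcmpAux_add {Y : ℕ → C} (t : ∀ n, Y (n + 1) ⟶ Y n) (n k k' : ℕ) :
    tcmpAux t n (k + k')
      = eqToHom (congrArg Y (Nat.add_assoc n k k').symm)
        ≫ tcmpAux t (n + k) k' ≫ tcmpAux t n k := by
  induction k' with
  | zero => simp [tcmpAux]
  | succ k' ih =>
    have e : n + (k + k') = n + k + k' := (Nat.add_assoc n k k').symm
    show t (n + (k + k')) ≫ tcmpAux t n (k + k') = _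
    rw [ih, tcmpAux, ← Category.assoc,
      tcmpAux_eqToHom t e (congrArg Y (by omega)) (congrArg Y e)]
    simp

/-- iterated `sqδ` : the `k`-fold transition composite intertwines `δ`s via `cmp`. -/
lemma TowerFiberData.tcmp_δ {Y : ℕ → C} {t : ∀ n, Y (n + 1) ⟶ Y n} {Yinf : C}
    {f : ∀ n, Yinf ⟶ Y n} (D : TowerFiberData C Y t Yinf f) (n k : ℕ) :
    tcmpAux t n k ≫ D.δ n
      = D.δ (n + k) ≫ (CategoryTheory.shiftFunctor C (1 : ℤ)).map (D.cmp n k) := by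
  rw [D.cmp_eq_tcmpAux, ← tcmpAux_map D.ft (CategoryTheory.shiftFunctor C (1 : ℤ))]
  exact tcmpAux_natural D.δ D.sqδ n k

end AuxRapid

/-- Let `X → Y → Z` be a cofibre sequence of towers in a stable ∞-category,
compatible with given maps from constant towers `X∞, Y∞, Z∞` which themselves form a cofibre
sequence.  If the tower for `X` is `r`-rapidly convergent and the tower for `Z` is
`r'`-rapidly convergent, then the tower for `Y` is `(r + r')`-rapidly convergent. -/
theorem cofibre_sequence_of_towers_rapid_convergence
    [Preadditive C] [HasZeroObject C] [HasShift C ℤ]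
    [∀ n : ℤ, (CategoryTheory.shiftFunctor C n).Additive] [Pretriangulated C]
    (X Y Z : ℕ → C)
    (tX : ∀ n, X (n + 1) ⟶ X n) (tY : ∀ n, Y (n + 1) ⟶ Y n) (tZ : ∀ n, Z (n + 1) ⟶ Z n)
    (Xinf Yinf Zinf : C)
    (fX : ∀ n, Xinf ⟶ X n) (fY : ∀ n, Yinf ⟶ Y n) (fZ : ∀ n, Zinf ⟶ Z n)
    (hcX : ∀ n, fX (n + 1) ≫ tX n = fX n) (hcY : ∀ n, fY (n + 1) ≫ tY n = fY n)
    (hcZ : ∀ n, fZ (n + 1) ≫ tZ n = fZ n)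
    -- the levelwise cofibre sequences
    (u : ∀ n, X n ⟶ Y n) (v : ∀ n, Y n ⟶ Z n) (w : ∀ n, Z n ⟶ (X n)⟦(1 : ℤ)⟧)
    (htri : ∀ n, Triangle.mk (u n) (v n) (w n) ∈ distTriang C)
    -- the cofibre sequence of the constant towers
    (uinf : Xinf ⟶ Yinf) (vinf : Yinf ⟶ Zinf) (winf : Zinf ⟶ Xinf⟦(1 : ℤ)⟧)
    (htriinf : Triangle.mk uinf vinf winf ∈ distTriang C)
    -- compatibility with the tower transition maps
    (hu : ∀ n, tX n ≫ u n = u (n + 1) ≫ tY n)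
    (hv : ∀ n, tY n ≫ v n = v (n + 1) ≫ tZ n)
    (hw : ∀ n, tZ n ≫ w n = w (n + 1) ≫ (CategoryTheory.shiftFunctor C (1 : ℤ)).map (tX n))
    -- compatibility with the maps from the constant towers
    (hfu : ∀ n, uinf ≫ fY n = fX n ≫ u n)
    (hfv : ∀ n, vinf ≫ fZ n = fY n ≫ v n)
    (hfw : ∀ n, fZ n ≫ w n = winf ≫ (CategoryTheory.shiftFunctor C (1 : ℤ)).map (fX n))
    (r r' : ℕ)
    (hX : RapidlyConvergent C X tX Xinf fX r)
    (hZ : RapidlyConvergent C Z tZ Zinf fZ r') :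
    RapidlyConvergent C Y tY Yinf fY (r + r') := by
  classical
  obtain ⟨DX, hDX⟩ := hX
  obtain ⟨DZ, hDZ⟩ := hZ
  -- construct fibre data for the tower Y
  have hFY : ∀ n, ∃ (F : C) (ι : F ⟶ Yinf) (δ : Y n ⟶ F⟦(1 : ℤ)⟧),
      Triangle.mk ι (fY n) δ ∈ distTriang C := fun n =>
    Pretriangulated.distinguished_cocone_triangle₁ (fY n)
  choose FY ιY δY htriY using hFY
  have hft : ∀ n, ∃ a : FY (n + 1) ⟶ FY n, a ≫ ιY n = ιY (n + 1) ∧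
      tY n ≫ δY n = δY (n + 1) ≫ (CategoryTheory.shiftFunctor C (1 : ℤ)).map a := by
    intro n
    obtain ⟨a, h1, h2⟩ := Pretriangulated.complete_distinguished_triangle_morphism₁
      (Triangle.mk (ιY (n + 1)) (fY (n + 1)) (δY (n + 1)))
      (Triangle.mk (ιY n) (fY n) (δY n)) (htriY (n + 1)) (htriY n)
      (𝟙 Yinf) (tY n) (by exact (hcY n).trans (Category.id_comp _).symm)
    exact ⟨a, by exact h1.symm.trans (Category.comp_id _), h2.symm⟩
  choose ftY hcomm hsqδ using hft
  set DY : TowerFiberData C Y tY Yinf fY := ⟨FY, ftY, ιY, δY, htriY, hcomm, hsqδ⟩ with hDY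
  -- basic consequences of the hypotheses on X and Z
  have hιX0 : ∀ n, DX.ι (n + r) = 0 := by
    intro n
    rw [← tcmpAux_comp_const DX.ι DX.comm n r, ← DX.cmp_eq_tcmpAux, hDX n, zero_comp]
  have hιZ0 : ∀ n, DZ.ι (n + r') = 0 := by
    intro n
    rw [← tcmpAux_comp_const DZ.ι DZ.comm n r', ← DZ.cmp_eq_tcmpAux, hDZ n, zero_comp]
  have hσZ : ∀ n, ∃ σ : Z (n + r') ⟶ Zinf, tcmpAux tZ n r' = σ ≫ fZ n := by
    intro n
    have h0 : tcmpAux tZ n r' ≫ DZ.δ n = 0 := by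
      rw [DZ.tcmp_δ n r', hDZ n, Functor.map_zero, comp_zero]
    have hlift : ∃ σ : Z (n + r') ⟶ Zinf, tcmpAux tZ n r' = σ ≫ fZ n :=
      Pretriangulated.Triangle.coyoneda_exact₃
        (Triangle.mk (DZ.ι n) (fZ n) (DZ.δ n)) (DZ.tri n) (tcmpAux tZ n r') h0
    exact hlift
  have hσX : ∀ n, ∃ σ : X (n + r) ⟶ Xinf, tcmpAux tX n r = σ ≫ fX n := by
    intro n
    have h0 : tcmpAux tX n r ≫ DX.δ n = 0 := by
      rw [DX.tcmp_δ n r, hDX n, Functor.map_zero, comp_zero]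
    have hlift : ∃ σ : X (n + r) ⟶ Xinf, tcmpAux tX n r = σ ≫ fX n :=
      Pretriangulated.Triangle.coyoneda_exact₃
        (Triangle.mk (DX.ι n) (fX n) (DX.δ n)) (DX.tri n) (tcmpAux tX n r) h0
    exact hlift
  have hpX : ∀ n, ∃ p : X (n + r) ⟶ Xinf, fX (n + r) ≫ p = 𝟙 Xinf := by
    intro n
    have hlift : ∃ p : X (n + r) ⟶ Xinf, 𝟙 Xinf = fX (n + r) ≫ p :=
      Pretriangulated.Triangle.yoneda_exact₂
        (Triangle.mk (DX.ι (n + r)) (fX (n + r)) (DX.δ (n + r))) (DX.tri (n + r))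
        (𝟙 Xinf) (by show DX.ι (n + r) ≫ 𝟙 Xinf = 0; rw [hιX0 n, zero_comp])
    obtain ⟨p, hp⟩ := hlift
    exact ⟨p, hp.symm⟩
  -- iterated naturality of u, v, w with respect to transition maps
  have hu_it : ∀ n k, tcmpAux tX n k ≫ u n = u (n + k) ≫ tcmpAux tY n k :=
    fun n k => tcmpAux_natural u hu n k
  have hv_it : ∀ n k, tcmpAux tY n k ≫ v n = v (n + k) ≫ tcmpAux tZ n k :=
    fun n k => tcmpAux_natural v hv n k
  have hw_it : ∀ n k, tcmpAux tZ n k ≫ w n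
      = w (n + k) ≫ (CategoryTheory.shiftFunctor C (1 : ℤ)).map (tcmpAux tX n k) := by
    intro n k
    rw [← tcmpAux_map tX (CategoryTheory.shiftFunctor C (1 : ℤ))]
    exact tcmpAux_natural w hw n k
  -- Step (a) : the maps ι of the fibre tower of Y vanish in levels ≥ r + r'
  have hιY0 : ∀ m, ιY (m + r + r') = 0 := by
    intro m
    have z12 : ιY (m + r + r') ≫ fY (m + r + r') = 0 :=
      Pretriangulated.comp_distTriang_mor_zero₁₂ _ (htriY (m + r + r'))
    -- ιY (m+r+r') ≫ vinf = 0
    have h1 : (ιY (m + r + r') ≫ vinf) ≫ fZ (m + r + r') = 0 := by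
      rw [Category.assoc, hfv, ← Category.assoc, z12, zero_comp]
    have hliftκ : ∃ κ : FY (m + r + r') ⟶ DZ.F (m + r + r'),
        ιY (m + r + r') ≫ vinf = κ ≫ DZ.ι (m + r + r') :=
      Pretriangulated.Triangle.coyoneda_exact₂
        (Triangle.mk (DZ.ι (m + r + r')) (fZ (m + r + r')) (DZ.δ (m + r + r')))
        (DZ.tri (m + r + r')) (ιY (m + r + r') ≫ vinf) h1
    obtain ⟨κ, hκ'⟩ := hliftκ
    have h2 : ιY (m + r + r') ≫ vinf = 0 := by
      rw [hκ', hιZ0 (m + r), comp_zero]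
    -- lift ιY through uinf
    have hliftlam : ∃ g : FY (m + r + r') ⟶ Xinf, ιY (m + r + r') = g ≫ uinf :=
      Pretriangulated.Triangle.coyoneda_exact₂
        (Triangle.mk uinf vinf winf) htriinf (ιY (m + r + r')) h2
    obtain ⟨lam, hlam'⟩ := hliftlam
    -- lam ≫ fX kills u
    have h3 : (lam ≫ fX (m + r + r')) ≫ u (m + r + r') = 0 := by
      rw [Category.assoc, ← hfu, ← Category.assoc, ← hlam', z12]
    -- factor the shift of (lam ≫ fX N) through w N
    have hliftθ : ∃ θ : (FY (m + r + r'))⟦(1 : ℤ)⟧ ⟶ Z (m + r + r'),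
        (CategoryTheory.shiftFunctor C (1 : ℤ)).map (lam ≫ fX (m + r + r'))
          = θ ≫ w (m + r + r') :=
      Pretriangulated.Triangle.coyoneda_exact₁
        (Triangle.mk (u (m + r + r')) (v (m + r + r')) (w (m + r + r')))
        (htri (m + r + r'))
        ((CategoryTheory.shiftFunctor C (1 : ℤ)).map (lam ≫ fX (m + r + r')))
        (by
          show (CategoryTheory.shiftFunctor C (1 : ℤ)).map (lam ≫ fX (m + r + r')) ≫
            (CategoryTheory.shiftFunctor C (1 : ℤ)).map (u (m + r + r')) = 0
          rw [← Functor.map_comp, h3, Functor.map_zero])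
    obtain ⟨θ, hθ'⟩ := hliftθ
    obtain ⟨σZ', hσZ'⟩ := hσZ (m + r)
    obtain ⟨θ₀, hθ₀⟩ := (CategoryTheory.shiftFunctor C (1 : ℤ)).map_surjective
      (θ ≫ σZ' ≫ winf)
    -- key : lam and θ₀ agree after composing with fX (m+r)
    have h4 : lam ≫ fX (m + r) = θ₀ ≫ fX (m + r) := by
      apply (CategoryTheory.shiftFunctor C (1 : ℤ)).map_injective
      rw [Functor.map_comp, Functor.map_comp, hθ₀]
      have e1 : lam ≫ fX (m + r)
          = (lam ≫ fX (m + r + r')) ≫ tcmpAux tX (m + r) r' := by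
        rw [Category.assoc, tcmpAux_const_comp fX hcX (m + r) r']
      rw [← Functor.map_comp, e1, Functor.map_comp, hθ', Category.assoc, ← hw_it (m + r) r',
        ← Category.assoc, ← Category.assoc]
      rw [hσZ']
      simp only [Category.assoc]
      rw [hfw (m + r)]
    have h5 : (lam - θ₀) ≫ fX (m + r) = 0 := by
      rw [Preadditive.sub_comp, h4, sub_self]
    have hliftξ : ∃ ξ : FY (m + r + r') ⟶ DX.F (m + r),
        lam - θ₀ = ξ ≫ DX.ι (m + r) :=
      Pretriangulated.Triangle.coyoneda_exact₂
        (Triangle.mk (DX.ι (m + r)) (fX (m + r)) (DX.δ (m + r))) (DX.tri (m + r))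
        (lam - θ₀) h5
    obtain ⟨ξ, hξ'⟩ := hliftξ
    have h6 : lam = θ₀ :=
      sub_eq_zero.mp (by rw [hξ', hιX0 m, comp_zero])
    -- conclude by faithfulness of the shift
    apply (CategoryTheory.shiftFunctor C (1 : ℤ)).map_injective
    have z31 : winf ≫ (CategoryTheory.shiftFunctor C (1 : ℤ)).map uinf = 0 :=
      Pretriangulated.comp_distTriang_mor_zero₃₁ _ htriinf
    have e : (CategoryTheory.shiftFunctor C (1 : ℤ)).map (ιY (m + r + r'))
        = θ ≫ σZ' ≫ winf ≫ (CategoryTheory.shiftFunctor C (1 : ℤ)).map uinf := by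
      rw [hlam', h6, Functor.map_comp, hθ₀]
      simp only [Category.assoc]
    rw [e, z31]
    simp
  -- Step (b) : the (r+r')-fold transition composite of Y factors through Yinf
  have hσY : ∀ n, ∃ σ : Y (n + r + r') ⟶ Yinf,
      tcmpAux tY (n + r) r' ≫ tcmpAux tY n r = σ ≫ fY n := by
    intro n
    obtain ⟨σZ', hσZ'⟩ := hσZ (n + r)
    obtain ⟨σX', hσX'⟩ := hσX n
    have h1 : tcmpAux tY (n + r) r' ≫ v (n + r)
        = (v (n + r + r') ≫ σZ') ≫ fZ (n + r) := by
      rw [hv_it (n + r) r', hσZ', ← Category.assoc]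
    have h2 : (v (n + r + r') ≫ σZ') ≫ winf = 0 := by
      obtain ⟨p, hp⟩ := hpX n
      have z23 : v (n + r) ≫ w (n + r) = 0 :=
        Pretriangulated.comp_distTriang_mor_zero₂₃ _ (htri (n + r))
      have h3 : ((v (n + r + r') ≫ σZ') ≫ winf) ≫
          (CategoryTheory.shiftFunctor C (1 : ℤ)).map (fX (n + r)) = 0 := by
        rw [Category.assoc, ← hfw (n + r), ← Category.assoc, ← h1, Category.assoc, z23,
          comp_zero]
      calc (v (n + r + r') ≫ σZ') ≫ winf
          = (((v (n + r + r') ≫ σZ') ≫ winf) ≫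
              (CategoryTheory.shiftFunctor C (1 : ℤ)).map (fX (n + r))) ≫
              (CategoryTheory.shiftFunctor C (1 : ℤ)).map p := by
            rw [Category.assoc, Category.assoc, Category.assoc, ← Functor.map_comp, hp]
            simp
        _ = 0 := by rw [h3, zero_comp]
    have hliftα : ∃ g : Y (n + r + r') ⟶ Yinf, v (n + r + r') ≫ σZ' = g ≫ vinf :=
      Pretriangulated.Triangle.coyoneda_exact₃
        (Triangle.mk uinf vinf winf) htriinf (v (n + r + r') ≫ σZ') h2
    obtain ⟨α', hα''⟩ := hliftα
    have h4 : (tcmpAux tY (n + r) r' - α' ≫ fY (n + r)) ≫ v (n + r) = 0 := by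
      rw [Preadditive.sub_comp, h1, Category.assoc α' (fY (n + r)) (v (n + r)),
        ← hfv (n + r), ← Category.assoc α' vinf (fZ (n + r)), ← hα'', sub_self]
    have hliftρ : ∃ g : Y (n + r + r') ⟶ X (n + r),
        tcmpAux tY (n + r) r' - α' ≫ fY (n + r) = g ≫ u (n + r) :=
      Pretriangulated.Triangle.coyoneda_exact₂
        (Triangle.mk (u (n + r)) (v (n + r)) (w (n + r))) (htri (n + r))
        (tcmpAux tY (n + r) r' - α' ≫ fY (n + r)) h4
    obtain ⟨ρ', hρ''⟩ := hliftρ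
    refine ⟨α' + ρ' ≫ σX' ≫ uinf, ?_⟩
    have h5 : tcmpAux tY (n + r) r' = α' ≫ fY (n + r) + ρ' ≫ u (n + r) := by
      rw [← hρ'']; abel
    rw [h5, Preadditive.add_comp, Preadditive.add_comp]
    congr 1
    · rw [Category.assoc, tcmpAux_const_comp fY hcY n r]
    · have h6 : u (n + r) ≫ tcmpAux tY n r = tcmpAux tX n r ≫ u n := (hu_it n r).symm
      rw [Category.assoc, h6, ← Category.assoc, hσX']
      simp only [Category.assoc]
      rw [← hfu n]
  -- Final computation : the (r+r')-fold composite in the fibre tower of Y vanishes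
  refine ⟨DY, fun n => ?_⟩
  have hδ0 : tcmpAux tY n (r + r') ≫ δY n = 0 := by
    obtain ⟨σ, hσ⟩ := hσY n
    have zfδ : fY n ≫ δY n = 0 :=
      Pretriangulated.comp_distTriang_mor_zero₂₃ _ (htriY n)
    rw [tcmpAux_add tY n r r']
    simp only [Category.assoc]
    rw [← Category.assoc (tcmpAux tY (n + r) r'), hσ, Category.assoc, zfδ, comp_zero,
      comp_zero]
  have h1 : δY (n + (r + r')) ≫
      (CategoryTheory.shiftFunctor C (1 : ℤ)).map (DY.cmp n (r + r')) = 0 := by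
    have h := DY.tcmp_δ n (r + r')
    have h' : tcmpAux tY n (r + r') ≫ δY n
        = δY (n + (r + r')) ≫
          (CategoryTheory.shiftFunctor C (1 : ℤ)).map (DY.cmp n (r + r')) := h
    rw [← h']
    exact hδ0
  have hι : ιY (n + (r + r')) = 0 := by
    rw [← Nat.add_assoc]; exact hιY0 n
  have hlifts : ∃ s : (FY (n + (r + r')))⟦(1 : ℤ)⟧ ⟶ Y (n + (r + r')),
      𝟙 ((FY (n + (r + r')))⟦(1 : ℤ)⟧) = s ≫ δY (n + (r + r')) :=
    Pretriangulated.Triangle.coyoneda_exact₁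
      (Triangle.mk (ιY (n + (r + r'))) (fY (n + (r + r'))) (δY (n + (r + r'))))
      (htriY (n + (r + r'))) (𝟙 ((FY (n + (r + r')))⟦(1 : ℤ)⟧))
      (by
        show 𝟙 ((FY (n + (r + r')))⟦(1 : ℤ)⟧) ≫
          (CategoryTheory.shiftFunctor C (1 : ℤ)).map (ιY (n + (r + r'))) = 0
        rw [hι, Functor.map_zero, comp_zero])
  obtain ⟨s, hs'⟩ := hlifts
  apply (CategoryTheory.shiftFunctor C (1 : ℤ)).map_injective
  rw [Functor.map_zero]
  calc (CategoryTheory.shiftFunctor C (1 : ℤ)).map (DY.cmp n (r + r'))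
      = (s ≫ δY (n + (r + r'))) ≫
          (CategoryTheory.shiftFunctor C (1 : ℤ)).map (DY.cmp n (r + r')) := by
        rw [← hs', Category.id_comp]
    _ = s ≫ (δY (n + (r + r')) ≫
          (CategoryTheory.shiftFunctor C (1 : ℤ)).map (DY.cmp n (r + r'))) :=
        Category.assoc _ _ _
    _ = 0 := by rw [h1, comp_zero]
end

section
/- Let C be a stable ∞-category admitting filtered colimits that commute with finite limits, and let q : I → Fun(Δ, C) be a filtered diagram of cosimplicial objects, each of which is d-rapidly convergent. Then the colimit cosimplicial object colim_I q is also d-rapidly convergent. -/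
open CategoryTheory Limits Pretriangulated MonoidalCategory

universe v u

variable (C : Type u) [Category.{v} C]

section AuxLemmas

variable {C}

/-- The `k`-fold composite `Y (n + k) ⟶ Y n` in a tower. -/
def towerCmp {Y : ℕ → C} (t : ∀ n, Y (n + 1) ⟶ Y n) : ∀ n k : ℕ, Y (n + k) ⟶ Y n
  | _, 0 => 𝟙 _
  | n, k + 1 => t (n + k) ≫ towerCmp t n k

section

variable [Preadditive C] [HasZeroObject C] [HasShift C ℤ]
  [∀ n : ℤ, (CategoryTheory.shiftFunctor C n).Additive] [Pretriangulated C]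
  {Y : ℕ → C} {t : ∀ n, Y (n + 1) ⟶ Y n} {Yinf : C} {f : ∀ n, Yinf ⟶ Y n}

lemma TowerFiberData.cmp_comp_ι (D : TowerFiberData C Y t Yinf f) (n k : ℕ) :
    D.cmp n k ≫ D.ι n = D.ι (n + k) := by
  induction k with
  | zero => simp [TowerFiberData.cmp]
  | succ k ih =>
      rw [show D.cmp n (k + 1) = D.ft (n + k) ≫ D.cmp n k from rfl, Category.assoc, ih,
        D.comm (n + k)]
      rfl

lemma TowerFiberData.ι_eq_zero (D : TowerFiberData C Y t Yinf f) {d : ℕ}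
    (h0 : ∀ n, D.cmp n d = 0) {m : ℕ} (hm : d ≤ m) : D.ι m = 0 := by
  obtain ⟨n, rfl⟩ : ∃ n, m = n + d := ⟨m - d, by omega⟩
  rw [← D.cmp_comp_ι n d, h0, Limits.zero_comp]

lemma TowerFiberData.towerCmp_comp_δ (D : TowerFiberData C Y t Yinf f) (n k : ℕ) :
    towerCmp t n k ≫ D.δ n
      = D.δ (n + k) ≫ (CategoryTheory.shiftFunctor C (1 : ℤ)).map (D.cmp n k) := by
  induction k with
  | zero => simp [towerCmp, TowerFiberData.cmp]
  | succ k ih =>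
      rw [show towerCmp t n (k + 1) = t (n + k) ≫ towerCmp t n k from rfl,
        show D.cmp n (k + 1) = D.ft (n + k) ≫ D.cmp n k from rfl,
        Category.assoc, ih, ← Category.assoc, D.sqδ (n + k), Category.assoc,
        ← Functor.map_comp]
      rfl

/-- If the `d`-fold tower composite is killed by `δ n` and `ι (n + d) = 0`, then the
`d`-fold composite in the tower of fibres is null. -/
lemma TowerFiberData.cmp_eq_zero_of (D : TowerFiberData C Y t Yinf f) (d n : ℕ)
    (hι : D.ι (n + d) = 0)
    (hδ : towerCmp t n d ≫ D.δ n = 0) :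
    D.cmp n d = 0 := by
  have h2 : D.δ (n + d) ≫ (CategoryTheory.shiftFunctor C (1 : ℤ)).map (D.cmp n d) = 0 := by
    rw [← D.towerCmp_comp_δ n d]; exact hδ
  have hR := rot_of_distTriang _ (D.tri (n + d))
  obtain ⟨g, hg⟩ : ∃ g : Yinf⟦(1 : ℤ)⟧ ⟶ (D.F n)⟦(1 : ℤ)⟧, (CategoryTheory.shiftFunctor C (1 : ℤ)).map (D.cmp n d)
      = (-(CategoryTheory.shiftFunctor C (1 : ℤ)).map (D.ι (n + d))) ≫ g :=
    Pretriangulated.Triangle.yoneda_exact₃ _ hR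
    ((CategoryTheory.shiftFunctor C (1 : ℤ)).map (D.cmp n d)) h2
  apply (CategoryTheory.shiftFunctor C (1 : ℤ)).map_injective
  rw [Functor.map_zero, hg]
  rw [hι]
  simp

end

section

variable {I : Type*} [SmallCategory I] [Limits.HasColimitsOfShape I C]

lemma ι_towerCmp (G : ℕ → I ⥤ C) (τ : ∀ n, G (n + 1) ⟶ G n) (n k : ℕ) (j : I) :
    colimit.ι (G (n + k)) j ≫ towerCmp (Y := fun m => colimit (G m)) (fun m => colimMap (τ m)) n k
      = towerCmp (Y := fun m => (G m).obj j) (fun m => (τ m).app j) n k ≫ colimit.ι (G n) j := by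
  induction k with
  | zero => simp [towerCmp]
  | succ k ih =>
      rw [show towerCmp (Y := fun m => colimit (G m)) (fun m => colimMap (τ m)) n (k + 1)
            = colimMap (τ (n + k))
              ≫ towerCmp (Y := fun m => colimit (G m)) (fun m => colimMap (τ m)) n k from rfl,
        show towerCmp (Y := fun m => (G m).obj j) (fun m => (τ m).app j) n (k + 1)
            = (τ (n + k)).app j
              ≫ towerCmp (Y := fun m => (G m).obj j) (fun m => (τ m).app j) n k from rfl,
        ← Category.assoc, ι_colimMap, Category.assoc, ih, ← Category.assoc]

end

end AuxLemmas

/-- Let `C` be a stable ∞-category admitting filtered colimits which commute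
with finite limits (encoded below by the exactness hypothesis `hexact` and the preservation of
the shift), and let `q : I → Fun(Δ, C)` be a filtered diagram of `d`-rapidly convergent
cosimplicial objects.  Then the colimit cosimplicial object is `d`-rapidly convergent.
(Formulated at the level of the associated `Tot`-towers: a filtered colimit of `d`-rapidly
convergent towers is `d`-rapidly convergent.) -/
theorem filtered_colimit_of_rapidly_convergent
    [Preadditive C] [HasZeroObject C] [HasShift C ℤ]
    [∀ n : ℤ, (CategoryTheory.shiftFunctor C n).Additive] [Pretriangulated C]
    (I : Type*) [SmallCategory I] [IsFiltered I]
    [HasColimitsOfShape I C]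
    [PreservesColimitsOfShape I (CategoryTheory.shiftFunctor C (1 : ℤ))]
    -- filtered colimits commute with finite limits: they preserve cofibre sequences
    (hexact : ∀ (T₁ T₂ T₃ : I ⥤ C) (a : T₁ ⟶ T₂) (b : T₂ ⟶ T₃)
      (c : T₃ ⟶ T₁ ⋙ CategoryTheory.shiftFunctor C (1 : ℤ)),
      (∀ i, Triangle.mk (a.app i) (b.app i) (c.app i) ∈ distTriang C) →
      Triangle.mk (colimMap a) (colimMap b)
        (colimMap c ≫ (preservesColimitIso (CategoryTheory.shiftFunctor C (1 : ℤ)) T₁).inv)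
        ∈ distTriang C)
    -- a filtered diagram of towers (the `Tot`-towers of the cosimplicial objects `q i`)
    (G : ℕ → I ⥤ C) (τ : ∀ n, G (n + 1) ⟶ G n)
    (Ginf : I ⥤ C) (φ : ∀ n, Ginf ⟶ G n)
    (hcompat : ∀ n, φ (n + 1) ≫ τ n = φ n)
    (d : ℕ)
    -- each cosimplicial object of the diagram is `d`-rapidly convergent
    (h : ∀ i : I, RapidlyConvergent C (fun n => (G n).obj i) (fun n => (τ n).app i)
      (Ginf.obj i) (fun n => (φ n).app i) d) :
    -- then so is the colimit
    RapidlyConvergent C (fun n => colimit (G n)) (fun n => colimMap (τ n))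
      (colimit Ginf) (fun n => colimMap (φ n)) d := by
  classical
  choose Dp hDp using h
  -- pointwise vanishing of `ι m` for `m ≥ d`
  have hι0 : ∀ (i : I) (m : ℕ), d ≤ m → (Dp i).ι m = 0 :=
    fun i m hm => (Dp i).ι_eq_zero (hDp i) hm
  -- pointwise : `δ m` is a (split) epi for `m ≥ d`
  have hepi : ∀ (i : I) (m : ℕ), d ≤ m → Epi ((Dp i).δ m) := by
    intro i m hm
    have hR := rot_of_distTriang _ ((Dp i).tri m)
    refine Pretriangulated.Triangle.epi₂ _ hR ?_
    show -(CategoryTheory.shiftFunctor C (1 : ℤ)).map ((Dp i).ι m) = 0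
    rw [hι0 i m hm]
    simp
  -- pointwise : `δ m` is a cokernel of `(φ m).app i` for `m ≥ d`
  have hdesc0 : ∀ (i : I) (m : ℕ), d ≤ m → ∀ (W : C) (k : (G m).obj i ⟶ W),
      (φ m).app i ≫ k = 0 → ∃ l : ((Dp i).F m)⟦(1 : ℤ)⟧ ⟶ W, (Dp i).δ m ≫ l = k := by
    intro i m hm W k hk
    have hR := rot_of_distTriang _ ((Dp i).tri m)
    obtain ⟨g, hg⟩ := Pretriangulated.Triangle.yoneda_exact₂ _ hR k hk
    exact ⟨g, hg.symm⟩
  -- Key claim: each `colimMap (φ n)` sits in a distinguished triangle whose third map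
  -- vanishes as soon as `d ≤ n`.
  have key : ∀ n : ℕ, ∃ (Q : C) (b : colimit (G n) ⟶ Q)
      (c : Q ⟶ (colimit Ginf)⟦(1 : ℤ)⟧),
      (Triangle.mk (colimMap (φ n)) b c ∈ distTriang C) ∧ (d ≤ n → c = 0) := by
    intro n
    by_cases hn : d ≤ n
    · -- build the pointwise-cokernel functor
      haveI : ∀ i : I, Epi ((Dp i).δ n) := fun i => hepi i n hn
      choose desc hdesc using fun i => hdesc0 i n hn
      let Z : I ⥤ C :=
        { obj := fun i => ((Dp i).F n)⟦(1 : ℤ)⟧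
          map := fun {i j} α => desc i _ ((G n).map α ≫ (Dp j).δ n) (by
            rw [← Category.assoc, ← (φ n).naturality α, Category.assoc]
            have hz := comp_distTriang_mor_zero₂₃ _ ((Dp j).tri n)
            simp only [Triangle.mk_mor₂, Triangle.mk_mor₃] at hz
            exact (congrArg (fun x => Ginf.map α ≫ x) hz).trans Limits.comp_zero)
          map_id := fun i => by
            apply (cancel_epi ((Dp i).δ n)).mp
            rw [hdesc]
            simp
          map_comp := fun {i j k} α β => by
            apply (cancel_epi ((Dp i).δ n)).mp
            rw [hdesc, ← Category.assoc, hdesc, Category.assoc, hdesc, ← Category.assoc,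
              ← Functor.map_comp] }
      let π : G n ⟶ Z :=
        { app := fun i => (Dp i).δ n
          naturality := fun {i j} α => (hdesc i _ _ _).symm }
      have hpoint : ∀ i : I, Triangle.mk ((φ n).app i) (π.app i)
          ((0 : Z ⟶ Ginf ⋙ CategoryTheory.shiftFunctor C (1 : ℤ)).app i) ∈ distTriang C := by
        intro i
        refine isomorphic_distinguished _ (rot_of_distTriang _ ((Dp i).tri n)) _ ?_
        refine Triangle.isoMk _ _ (Iso.refl _) (Iso.refl _) (Iso.refl _) (by exact (Category.comp_id _).trans (Category.id_comp _).symm) (by exact (Category.comp_id _).trans (Category.id_comp _).symm) ?_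
        show (0 : ((Dp i).F n)⟦(1 : ℤ)⟧ ⟶ (Ginf.obj i)⟦(1 : ℤ)⟧) ≫ (CategoryTheory.shiftFunctor C (1 : ℤ)).map (𝟙 (Ginf.obj i))
          = 𝟙 _ ≫ (-(CategoryTheory.shiftFunctor C (1 : ℤ)).map ((Dp i).ι n))
        rw [hι0 i n hn]
        simp [Limits.zero_app]
      have hdist := hexact Ginf (G n) Z (φ n) π 0 hpoint
      have hz : colimMap (0 : Z ⟶ Ginf ⋙ CategoryTheory.shiftFunctor C (1 : ℤ)) = 0 := by
        apply colimit.hom_ext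
        intro j
        rw [ι_colimMap, Limits.zero_app, Limits.zero_comp, Limits.comp_zero]
      rw [hz, Limits.zero_comp] at hdist
      exact ⟨colimit Z, colimMap π, 0, hdist, fun _ => rfl⟩
    · obtain ⟨Q, b, c, hT⟩ := distinguished_cocone_triangle (colimMap (φ n))
      exact ⟨Q, b, c, hT, fun hdn => absurd hdn hn⟩
  choose Q bb cc hdist hczero using key
  -- the triangles for the colimit tower, by inverse rotation
  have htri : ∀ n, (Triangle.mk (colimMap (φ n)) (bb n) (cc n)).invRotate ∈ distTriang C :=
    fun n => inv_rot_of_distTriang _ (hdist n)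
  -- the transition maps on the fibres, by completion of triangle morphisms
  have hsq : ∀ n, (Triangle.mk (colimMap (φ (n + 1))) (bb (n + 1)) (cc (n + 1))).invRotate.mor₂
      ≫ colimMap (τ n)
      = 𝟙 (colimit Ginf) ≫ (Triangle.mk (colimMap (φ n)) (bb n) (cc n)).invRotate.mor₂ := by
    intro n
    show colimMap (φ (n + 1)) ≫ colimMap (τ n) = 𝟙 _ ≫ colimMap (φ n)
    rw [Category.id_comp]
    apply colimit.hom_ext
    intro j
    rw [← Category.assoc, ι_colimMap, Category.assoc, ι_colimMap, ← Category.assoc,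
      ι_colimMap, ← NatTrans.comp_app, hcompat n]
  have hftE := fun n => complete_distinguished_triangle_morphism₁ _ _ (htri (n + 1)) (htri n)
    (𝟙 (colimit Ginf)) (colimMap (τ n)) (hsq n)
  choose ft hft1 hft2 using hftE
  -- assemble the fibre data for the colimit tower
  let D : TowerFiberData C (fun n => colimit (G n)) (fun n => colimMap (τ n)) (colimit Ginf)
      (fun n => colimMap (φ n)) :=
    { F := fun n => ((Triangle.mk (colimMap (φ n)) (bb n) (cc n)).obj₃)⟦(-1 : ℤ)⟧
      ft := ft
      ι := fun n => (Triangle.mk (colimMap (φ n)) (bb n) (cc n)).invRotate.mor₁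
      δ := fun n => (Triangle.mk (colimMap (φ n)) (bb n) (cc n)).invRotate.mor₃
      tri := htri
      comm := fun n => by
        have hx := hft1 n
        exact ((Category.comp_id _).symm.trans hx).symm
      sqδ := fun n => (hft2 n).symm }
  refine ⟨D, fun n => ?_⟩
  refine D.cmp_eq_zero_of d n ?_ ?_
  · -- `ι (n + d) = 0`
    show (Triangle.mk (colimMap (φ (n + d))) (bb (n + d)) (cc (n + d))).invRotate.mor₁ = 0
    show -((CategoryTheory.shiftFunctor C (-1 : ℤ)).map (cc (n + d)) ≫ (shiftEquiv C (1 : ℤ)).unitIso.inv.app _) = 0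
    rw [hczero (n + d) (by omega)]
    simp
  · -- the `d`-fold tower composite is killed by `δ n`
    apply colimit.hom_ext
    intro j
    rw [Limits.comp_zero, ← Category.assoc, ι_towerCmp G τ n d j, Category.assoc]
    -- pointwise, the tower composite factors through `(φ n).app j`
    obtain ⟨σ, hσ⟩ : ∃ σ, towerCmp (Y := fun m => (G m).obj j) (fun m => (τ m).app j) n d
        = σ ≫ (φ n).app j := by
      have h2 : towerCmp (Y := fun m => (G m).obj j) (fun m => (τ m).app j) n d
          ≫ (Dp j).δ n = 0 := by
        rw [(Dp j).towerCmp_comp_δ n d, hDp j n, Functor.map_zero, Limits.comp_zero]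
      obtain ⟨g, hg⟩ := Pretriangulated.Triangle.coyoneda_exact₃ _ ((Dp j).tri n) _ h2
      exact ⟨g, hg⟩
    have hz2 : colimMap (φ n) ≫ D.δ n = 0 := by
      have hz3 := comp_distTriang_mor_zero₂₃ _ (D.tri n)
      exact hz3
    rw [hσ, Category.assoc, ← ι_colimMap_assoc, hz2, Limits.comp_zero, Limits.comp_zero]
end
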